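/- Let κ be a real number with −π/2 < κ < 0. Then every complex number λ satisfying λ = κ·exp(−λ) has negative real part (Re λ < 0). -/

import Mathlib

open Real

/-- For `κ ∈ (−π/2, 0)`, every complex root `λ` of the characteristic equation
`λ = κ·exp(−λ)` of the delay equation `ẋ(t) = κ x(t−1)` has negative real part. -/
theorem stmt_0 (κ : ℝ) (hκ₁ : -(π / 2) < κ) (hκ₂ : κ < 0)
    (z : ℂ) (hz : z = (κ : ℂ) * Complex.exp (-z)) : z.re < 0 := by
  by_contra h
  push_neg at h
  set x := z.re with hx
  set y := z.im with hy
  -- |z| = |κ| * exp(-x)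
  have habs : ‖z‖ = |κ| * Real.exp (-x) := by
    conv_lhs => rw [hz]
    rw [norm_mul, Complex.norm_exp, Complex.norm_real]
    simp [hx]
  have hexp_le : Real.exp (-x) ≤ 1 := Real.exp_le_one_iff.mpr (by linarith)
  have hyle : |y| ≤ |κ| := by
    have h1 : |y| ≤ ‖z‖ := Complex.abs_im_le_norm z
    have h2 : |κ| * Real.exp (-x) ≤ |κ| * 1 :=
      mul_le_mul_of_nonneg_left hexp_le (abs_nonneg κ)
    rw [habs] at h1
    linarith
  have hκabs : |κ| < π / 2 := by
    rw [abs_of_neg hκ₂]; linarith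
  have hylt : |y| < π / 2 := lt_of_le_of_lt hyle hκabs
  have hcos : 0 < Real.cos y := by
    apply Real.cos_pos_of_mem_Ioo
    constructor
    · linarith [abs_lt.mp hylt |>.1]
    · linarith [abs_lt.mp hylt |>.2]
  -- real part of the equation
  have hre : x = κ * (Real.exp (-x) * Real.cos y) := by
    have := congrArg Complex.re hz
    simpa [Complex.exp_re, Complex.mul_re] using this
  have : κ * (Real.exp (-x) * Real.cos y) < 0 :=
    mul_neg_of_neg_of_pos hκ₂ (mul_pos (Real.exp_pos _) hcos)
  linarith
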